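/- Let n ≥ 3 and let G be a maximal dot irreducible sawtooth dot graph over {1,…,n−1} whose first maximal ascending segment is (1, n−1) (i.e. there are no dots to the left of a segment running from 1 to n−1). Then G is the lower complete triangle, i.e. its segment list is [(1,n−1),(1,n−2),…,(1,1)]. -/

import Mathlib

/-- The underlying sequence of a dot graph given as a list of ascending
segments `(p, q)`: segment `(p, q)` contributes `p, p+1, …, q`. -/
def toSeq (L : List (ℕ × ℕ)) : List ℕ :=
  L.flatMap fun s => List.range' s.1 (s.2 - s.1 + 1)

/-- `L` is the list of maximal ascending segments of a sawtooth dot graph over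
`{1, …, n-1}`: `1 ≤ pᵢ ≤ qᵢ ≤ n-1` for all `i`, and `p_{i+1} ≤ q_i` for all `i`. -/
def IsSawtooth (n : ℕ) (L : List (ℕ × ℕ)) : Prop :=
  (∀ s ∈ L, 1 ≤ s.1 ∧ s.1 ≤ s.2 ∧ s.2 ≤ n - 1) ∧
  ∀ (i : ℕ) (h : i + 1 < L.length),
    (L.get ⟨i + 1, h⟩).1 ≤ (L.get ⟨i, Nat.lt_of_succ_lt h⟩).2

/-- A sawtooth dot graph (given by its segment list) is dot reducible if it
contains a horizontal line, a box, a hexagon of type 1 or 2, a double box, or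
a double hexagon. -/
def DotReducible (L : List (ℕ × ℕ)) : Prop :=
  -- horizontal line
  (∃ (i : ℕ) (h : i + 1 < L.length),
      (L.get ⟨i, Nat.lt_of_succ_lt h⟩).2 = (L.get ⟨i + 1, h⟩).1) ∨
  -- box
  (∃ i j : Fin L.length, i < j ∧
      (L.get i).1 ≤ (L.get j).1 ∧ (L.get i).2 ≤ (L.get j).2) ∨
  -- hexagon of type 1
  (∃ i j l : Fin L.length, i < j ∧ j < l ∧
      (L.get i).1 ≤ (L.get j).1 ∧ (L.get i).2 ≤ (L.get l).2 ∧
      (L.get l).1 ≤ (L.get j).2) ∨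
  -- hexagon of type 2
  (∃ i j l : Fin L.length, i < j ∧ j < l ∧
      (L.get i).1 ≤ (L.get l).1 ∧ (L.get j).2 ≤ (L.get l).2 ∧
      (L.get j).1 ≤ (L.get i).2) ∨
  -- double box
  (∃ i j l : Fin L.length, i < j ∧ j < l ∧
      (L.get i).2 ≤ (L.get j).2 ∧ (L.get j).1 ≤ (L.get l).1 ∧
      (L.get i).1 ≤ (L.get l).2 + 1) ∨
  -- double hexagon
  (∃ i j l m : Fin L.length, i < j ∧ j ≤ l ∧ l < m ∧
      (L.get i).1 ≤ (L.get j).1 ∧ (L.get l).2 ≤ (L.get m).2)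

/-- The spindle at `k` over `{1, …, n-1}`: segments `(s, n-1)` for
`s = n-1` down to `k+2`, then `(1, n-1)`, then `(1, t)` for `t = k` down to `1`. -/
def spindle (n k : ℕ) : List (ℕ × ℕ) :=
  ((List.range (n - 2 - k)).map fun i => (n - 1 - i, n - 1)) ++
    [(1, n - 1)] ++
    ((List.range k).map fun i => (1, k - i))

/-- `L` is a maximal dot irreducible sawtooth dot graph over `{1, …, n-1}`:
it is dot irreducible, and every sawtooth dot graph over `{1, …, n-1}`
containing it as a proper subsequence is dot reducible. -/
def MaxDotIrreducible (n : ℕ) (L : List (ℕ × ℕ)) : Prop :=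
  IsSawtooth n L ∧ ¬ DotReducible L ∧
  ∀ M : List (ℕ × ℕ), IsSawtooth n M → List.Sublist (toSeq L) (toSeq M) →
    toSeq L ≠ toSeq M → DotReducible M

/-- A maximal dot irreducible sawtooth dot graph over `{1, …, n-1}` whose
first maximal ascending segment is `(1, n-1)` is the lower complete
triangle `[(1,n-1),(1,n-2),…,(1,1)]`. -/
lemma joinSub : ∀ (A B : List (List ℕ)), A.length ≤ B.length →
    (∀ i (h : i < A.length) (h' : i < B.length), A[i].Sublist B[i]) →
    A.flatten.Sublist B.flatten := by
  intro A
  induction A with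
  | nil => intro B _ _; simp [List.nil_sublist]
  | cons a A ih =>
    intro B hlen hsub
    cases B with
    | nil => simp at hlen
    | cons b B =>
      simp only [List.flatten_cons]
      exact (hsub 0 (by simp) (by simp)).append
        (ih B (by simpa using hlen) fun i h h' => hsub (i+1) (by simpa using h) (by simpa using h'))

lemma joinEq : ∀ (A B : List (List ℕ)), A.length ≤ B.length →
    (∀ i (h : i < A.length) (h' : i < B.length), A[i].Sublist B[i]) →
    (∀ b ∈ B, b ≠ []) → A.flatten = B.flatten →
    A.length = B.length ∧ ∀ i (h : i < A.length) (h' : i < B.length), A[i] = B[i] := by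
  intro A
  induction A with
  | nil =>
    intro B _ _ hne hflat
    cases B with
    | nil => simp
    | cons b B =>
      exfalso
      apply hne b (by simp)
      have : b ++ B.flatten = [] := by simpa using hflat.symm
      exact (List.append_eq_nil_iff.mp this).1
  | cons a A ih =>
    intro B hlen hsub hne hflat
    cases B with
    | nil => simp at hlen
    | cons b B =>
      have hab : a.Sublist b := hsub 0 (by simp) (by simp)
      have hsubT : ∀ i (h : i < A.length) (h' : i < B.length), A[i].Sublist B[i] :=
        fun i h h' => hsub (i+1) (by simpa using h) (by simpa using h')
      have hlenT : A.length ≤ B.length := by simpa using hlen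
      have hflatsub : A.flatten.Sublist B.flatten := joinSub A B hlenT hsubT
      have hl : a.length = b.length := by
        have h1 : a.length + A.flatten.length = b.length + B.flatten.length := by
          have := congrArg List.length hflat
          simpa using this
        have := hab.length_le
        have := hflatsub.length_le
        omega
      have hab' : a = b := hab.eq_of_length hl
      have hflat' : A.flatten = B.flatten := by
        have : a ++ A.flatten = a ++ B.flatten := by
          simpa [hab'] using hflat
        exact (List.append_cancel_left this)
      obtain ⟨hl2, hg⟩ := ih B hlenT hsubT (fun x hx => hne x (by simp [hx])) hflat'
      refine ⟨by simp [hl2], ?_⟩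
      intro i h h'
      cases i with
      | zero => simpa using hab'
      | succ i => exact hg i (by simpa using h) (by simpa using h')

lemma range'_sub (p q m : ℕ) (hp : 1 ≤ p) (hpq : p ≤ q) (hq : q ≤ m) :
    (List.range' p (q - p + 1)).Sublist (List.range' 1 m) := by
  have h1 : (List.range' p (q-p+1)).Sublist (List.range' p (m-p+1)) :=
    (List.range'_sublist_right).mpr (by omega)
  have h2 := @List.range'_append 1 (p-1) (m-p+1) 1
  rw [show 1+1*(p-1) = p from by omega, show (p-1)+(m-p+1) = m from by omega] at h2
  exact h1.trans (h2 ▸ List.sublist_append_right _ _)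

theorem maximal_first_segment_lower_triangle (n : ℕ) (hn : 3 ≤ n)
    (L : List (ℕ × ℕ)) (hL : MaxDotIrreducible n L)
    (hhead : L.head? = some (1, n - 1)) :
    L = (List.range (n - 1)).map fun i => (1, n - 1 - i) := by
  obtain ⟨⟨hbounds, hstep⟩, hirr, hmax⟩ := hL
  have hlen0 : 0 < L.length := by
    cases L with
    | nil => simp at hhead
    | cons a t => simp
  have h0 : L.get ⟨0, hlen0⟩ = (1, n-1) := by
    cases L with
    | nil => simp at hhead
    | cons a t => simpa using hhead
  rw [DotReducible] at hirr
  push_neg at hirr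
  obtain ⟨hhl, hbox, hhex1, hhex2, hdbox, hdhex⟩ := hirr
  have hp1 : ∀ i : Fin L.length, 1 ≤ (L.get i).1 := fun i => (hbounds _ (L.get_mem _)).1
  have hpq : ∀ i : Fin L.length, (L.get i).1 ≤ (L.get i).2 := fun i => (hbounds _ (L.get_mem _)).2.1
  -- strict decrease of the q's
  have hq : ∀ i j : Fin L.length, i < j → (L.get j).2 < (L.get i).2 := by
    intro i j hij
    by_cases hi : (i : ℕ) = 0
    · have hi0 : i = ⟨0, hlen0⟩ := Fin.ext hi
      apply hbox i j hij
      rw [hi0, h0]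
      exact hp1 j
    · have h0i : (⟨0, hlen0⟩ : Fin L.length) < i := by
        exact Fin.mk_lt_mk.mpr (Nat.pos_of_ne_zero hi) |>.trans_le (le_refl i)
      exact hdhex ⟨0, hlen0⟩ i i j h0i (le_refl i) hij (by rw [h0]; exact hp1 i)
  -- q_i + i ≤ n - 1
  have hqle : ∀ (k : ℕ) (h : k < L.length), (L.get ⟨k, h⟩).2 + k ≤ n - 1 := by
    intro k
    induction k with
    | zero => intro h; rw [h0]; omega
    | succ k ih =>
      intro h
      have hk : k < L.length := Nat.lt_of_succ_lt h
      have := hq ⟨k, hk⟩ ⟨k+1, h⟩ (by simp)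
      have := ih hk
      omega
  have hLlen : L.length ≤ n - 1 := by
    have hlast : L.length - 1 < L.length := by omega
    have := hqle (L.length - 1) hlast
    have := hpq ⟨L.length - 1, hlast⟩
    have := hp1 ⟨L.length - 1, hlast⟩
    omega
  -- the triangle T
  set T : List (ℕ × ℕ) := (List.range (n - 1)).map (fun i => (1, n - 1 - i)) with hT
  have hTlen : T.length = n - 1 := by simp [hT]
  have hTget : ∀ (i : ℕ) (h : i < T.length), T.get ⟨i, h⟩ = (1, n - 1 - i) := by
    intro i h
    simp [hT]
  have hST : IsSawtooth n T := by
    constructor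
    · intro s hs
      simp only [hT, List.mem_map, List.mem_range] at hs
      obtain ⟨i, hi, rfl⟩ := hs
      refine ⟨le_refl 1, by omega, by omega⟩
    · intro i h
      rw [hTget (i+1) h, hTget i (Nat.lt_of_succ_lt h)]
      have : i + 1 < n - 1 := by rwa [hTlen] at h
      simp
      omega
  have hTirr : ¬ DotReducible T := by
    intro hred
    have hTq : ∀ i j : Fin T.length, i < j → (T.get j).2 < (T.get i).2 := by
      intro i j hij
      rw [hTget i i.2, hTget j j.2]
      have : (j : ℕ) < n - 1 := by rw [← hTlen]; exact j.2
      simp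
      omega
    rcases hred with ⟨i, h, heq⟩ | ⟨i, j, hij, _, h2⟩ | ⟨i, j, l, hij, hjl, _, h2, _⟩ |
      ⟨i, j, l, hij, hjl, _, h2, _⟩ | ⟨i, j, l, hij, hjl, h1, _, _⟩ |
      ⟨i, j, l, m, hij, hjl, hlm, _, h2⟩
    · rw [hTget i _, hTget (i+1) h] at heq
      have : i + 1 < n - 1 := by rwa [hTlen] at h
      simp at heq
      omega
    · exact absurd h2 (not_le.mpr (hTq i j hij))
    · exact absurd h2 (not_le.mpr (hTq i l (hij.trans hjl)))
    · exact absurd h2 (not_le.mpr (hTq j l hjl))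
    · exact absurd h1 (not_le.mpr (hTq i j hij))
    · exact absurd h2 (not_le.mpr (hTq l m hlm))
  -- toSeq as flatten of maps
  have htoseq : ∀ M : List (ℕ × ℕ), toSeq M = (M.map fun s => List.range' s.1 (s.2 - s.1 + 1)).flatten := by
    intro M
    simp [toSeq, List.flatMap]
  set f : ℕ × ℕ → List ℕ := fun s => List.range' s.1 (s.2 - s.1 + 1) with hf
  have hAlen : (L.map f).length = L.length := by simp
  have hBlen : (T.map f).length = n - 1 := by simp [hT]
  have hABsub : ∀ i (h : i < (L.map f).length) (h' : i < (T.map f).length),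
      ((L.map f)[i]).Sublist ((T.map f)[i]) := by
    intro i h h'
    have hiL : i < L.length := by simpa using h
    have hiT : i < T.length := by simpa using h'
    have e1 : (L.map f)[i] = f (L.get ⟨i, hiL⟩) := by simp
    have e2 : (T.map f)[i] = f (T.get ⟨i, hiT⟩) := by simp
    rw [e1, e2, hTget i hiT]
    have h1 := hp1 ⟨i, hiL⟩
    have h2 := hpq ⟨i, hiL⟩
    have h3 := hqle i hiL
    have hin : i < n - 1 := by rwa [hTlen] at hiT
    simp only [hf]
    have : (1 : ℕ) ≤ n - 1 - i := by omega
    rw [show (n - 1 - i) - 1 + 1 = n - 1 - i from by omega]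
    exact range'_sub _ _ _ h1 h2 (by omega)
  have hsub : (toSeq L).Sublist (toSeq T) := by
    rw [htoseq L, htoseq T]
    exact joinSub _ _ (by rw [hAlen, hBlen]; exact hLlen) hABsub
  have heq : toSeq L = toSeq T := by
    by_contra hne
    exact hTirr (hmax T hST hsub hne)
  have hBne : ∀ b ∈ T.map f, b ≠ [] := by
    intro b hb
    simp only [hT, List.map_map, List.mem_map, List.mem_range, Function.comp] at hb
    obtain ⟨i, hi, rfl⟩ := hb
    simp [hf]
  obtain ⟨hleq, hgeq⟩ := joinEq (L.map f) (T.map f)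
    (by rw [hAlen, hBlen]; exact hLlen) hABsub hBne (by rw [← htoseq L, ← htoseq T]; exact heq)
  have hLlen' : L.length = n - 1 := by rw [← hAlen, hleq, hBlen]
  apply List.ext_get (by simpa [hT] using hLlen')
  intro i h1 h2
  have hiT : i < T.length := by rw [hTlen]; rwa [← hLlen']
  have := hgeq i (by simpa using h1) (by simpa using hiT)
  have e1 : (L.map f)[i]'(by simpa using h1) = f (L.get ⟨i, h1⟩) := by simp
  have e2 : (T.map f)[i]'(by simpa using hiT) = f (T.get ⟨i, hiT⟩) := by simp
  rw [e1, e2, hTget i hiT] at this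
  simp only [hf] at this
  have hin : i < n - 1 := by rwa [hTlen] at hiT
  rw [show (n - 1 - i) - 1 + 1 = n - 1 - i from by omega] at this
  -- from range' p (q-p+1) = range' 1 (n-1-i) deduce p = 1, q = n-1-i
  have hlen' : (L.get ⟨i, h1⟩).2 - (L.get ⟨i, h1⟩).1 + 1 = n - 1 - i := by
    have := congrArg List.length this
    simpa using this
  have hhd : (L.get ⟨i, h1⟩).1 = 1 := by
    rw [show n - 1 - i = (n - 1 - i - 1) + 1 from by omega, List.range'_succ] at this
    rw [List.range'_succ] at this
    exact (List.cons.injEq _ _ _ _).mp this |>.1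
  have h1' := hp1 ⟨i, h1⟩
  have h2' := hpq ⟨i, h1⟩
  have : L.get ⟨i, h1⟩ = (1, n - 1 - i) := by
    have : (L.get ⟨i, h1⟩).2 = n - 1 - i := by omega
    exact Prod.ext hhd this
  rw [this]
  simp [hT]
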